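/- The nonnegative rank is lower semicontinuous on the set of nonnegative matrices: if P is a nonnegative n×m matrix without zero columns and rk₊(P) = k, then there exists ε > 0 such that every nonnegative matrix N with Frobenius distance ‖N − P‖_F < ε satisfies rk₊(N) ≥ k. -/

import Mathlib

open Matrix BigOperators Filter Topology

/-- The nonnegative rank: least `k` such that `P` is a sum of `k` nonnegative dyads. -/
noncomputable def nnRank {n m : ℕ} (P : Matrix (Fin n) (Fin m) ℝ) : ℕ :=
  sInf {k : ℕ | ∃ (c : Fin k → Fin n → ℝ) (r : Fin k → Fin m → ℝ),
    (∀ h i, 0 ≤ c h i) ∧ (∀ h j, 0 ≤ r h j) ∧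
    P = ∑ h, Matrix.vecMulVec (c h) (r h)}

/-- Frobenius distance between two matrices. -/
noncomputable def frobDist {n m : ℕ} (P N : Matrix (Fin n) (Fin m) ℝ) : ℝ :=
  Real.sqrt (∑ i, ∑ j, (P i j - N i j) ^ 2)

/-- Every entrywise-nonnegative matrix admits some nonnegative factorization. -/
lemma exists_nn_factorization {n m : ℕ} (N : Matrix (Fin n) (Fin m) ℝ)
    (hN : ∀ i j, 0 ≤ N i j) :
    ∃ (c : Fin (n * m) → Fin n → ℝ) (r : Fin (n * m) → Fin m → ℝ),
      (∀ h i, 0 ≤ c h i) ∧ (∀ h j, 0 ≤ r h j) ∧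
      N = ∑ h, Matrix.vecMulVec (c h) (r h) := by
  let e : Fin n × Fin m ≃ Fin (n * m) := finProdFinEquiv
  refine ⟨fun h i => if i = (e.symm h).1 then N i ((e.symm h).2) else 0,
          fun h j => if j = (e.symm h).2 then 1 else 0, ?_, ?_, ?_⟩
  · intro h i; dsimp only; split <;> simp [hN]
  · intro h j; dsimp only; split <;> simp
  · ext i j
    rw [Matrix.sum_apply]
    simp only [Matrix.vecMulVec_apply]
    rw [← e.sum_comp (fun h => _)]
    simp only [Equiv.symm_apply_apply]
    rw [Fintype.sum_prod_type]
    simp [Finset.sum_ite_eq, eq_comm, mul_ite]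

/-- Normalized factorization: columns bounded by 1, rows bounded by `B`. -/
lemma exists_normalized_factorization {n m : ℕ} [Nonempty (Fin n)] {t : ℕ}
    (B : ℝ) (hB : 0 ≤ B) (N : Matrix (Fin n) (Fin m) ℝ)
    (hNB : ∀ i j, N i j ≤ B)
    (c : Fin t → Fin n → ℝ) (r : Fin t → Fin m → ℝ)
    (hc : ∀ h i, 0 ≤ c h i) (hr : ∀ h j, 0 ≤ r h j)
    (hN : N = ∑ h, Matrix.vecMulVec (c h) (r h)) :
    ∃ (c' : Fin t → Fin n → ℝ) (r' : Fin t → Fin m → ℝ),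
      (∀ h i, c' h i ∈ Set.Icc (0:ℝ) 1) ∧ (∀ h j, r' h j ∈ Set.Icc (0:ℝ) B) ∧
      N = ∑ h, Matrix.vecMulVec (c' h) (r' h) := by
  classical
  set M : Fin t → ℝ := fun h => Finset.univ.sup' Finset.univ_nonempty (c h) with hM
  have hMmem : ∀ h, ∃ i, c h i = M h := by
    intro h
    obtain ⟨i, -, hi⟩ := Finset.exists_mem_eq_sup' Finset.univ_nonempty (c h)
    exact ⟨i, hi.symm⟩
  have hle : ∀ h i, c h i ≤ M h := fun h i => Finset.le_sup' _ (Finset.mem_univ i)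
  have hM0 : ∀ h, 0 ≤ M h := by
    intro h; obtain ⟨i, hi⟩ := hMmem h; rw [← hi]; exact hc h i
  refine ⟨fun h i => if M h = 0 then 0 else c h i / M h,
          fun h j => M h * r h j, ?_, ?_, ?_⟩
  · intro h i
    dsimp only
    split
    · exact ⟨le_refl 0, zero_le_one⟩
    · rename_i h0
      have hMpos : 0 < M h := lt_of_le_of_ne (hM0 h) (Ne.symm h0)
      exact ⟨div_nonneg (hc h i) (hM0 h), (div_le_one hMpos).mpr (hle h i)⟩
  · intro h j
    dsimp only
    constructor
    · exact mul_nonneg (hM0 h) (hr h j)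
    · obtain ⟨i0, hi0⟩ := hMmem h
      rw [← hi0]
      have : c h i0 * r h j ≤ N i0 j := by
        rw [hN, Matrix.sum_apply]
        simp only [Matrix.vecMulVec_apply]
        exact Finset.single_le_sum (f := fun h' => c h' i0 * r h' j)
          (fun h' _ => mul_nonneg (hc h' i0) (hr h' j)) (Finset.mem_univ h)
      exact this.trans (hNB i0 j)
  · rw [hN]
    refine Finset.sum_congr rfl fun h _ => ?_
    ext i j
    simp only [Matrix.vecMulVec_apply]
    split
    · rename_i h0
      have : c h i = 0 := le_antisymm (h0 ▸ hle h i) (hc h i)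
      simp [this]
    · rename_i h0
      field_simp

/-- The set of matrices admitting a bounded nonnegative factorization with `t` dyads
is compact. -/
lemma isCompact_factSet (n m t : ℕ) (B : ℝ) :
    IsCompact {N : Matrix (Fin n) (Fin m) ℝ |
      ∃ (c : Fin t → Fin n → ℝ) (r : Fin t → Fin m → ℝ),
        (∀ h i, c h i ∈ Set.Icc (0:ℝ) 1) ∧ (∀ h j, r h j ∈ Set.Icc (0:ℝ) B) ∧
        N = ∑ h, Matrix.vecMulVec (c h) (r h)} := by
  classical
  set F : (Fin t → Fin n → ℝ) × (Fin t → Fin m → ℝ) → Matrix (Fin n) (Fin m) ℝ :=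
    fun p => ∑ h, Matrix.vecMulVec (p.1 h) (p.2 h) with hF
  have hFc : Continuous F := by
    apply continuous_matrix
    intro i j
    have : ∀ p : (Fin t → Fin n → ℝ) × (Fin t → Fin m → ℝ),
        F p i j = ∑ h, p.1 h i * p.2 h j := by
      intro p
      rw [hF]
      simp [Matrix.sum_apply, Matrix.vecMulVec_apply]
    simp only [this]
    apply continuous_finset_sum
    intro h _
    fun_prop
  set K : Set ((Fin t → Fin n → ℝ) × (Fin t → Fin m → ℝ)) :=
    (Set.univ.pi fun _ => Set.univ.pi fun _ => Set.Icc (0:ℝ) 1) ×ˢ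
    (Set.univ.pi fun _ => Set.univ.pi fun _ => Set.Icc (0:ℝ) B) with hK
  have hKc : IsCompact K := by
    apply IsCompact.prod
    · exact isCompact_univ_pi fun _ => isCompact_univ_pi fun _ => isCompact_Icc
    · exact isCompact_univ_pi fun _ => isCompact_univ_pi fun _ => isCompact_Icc
  have himg : {N : Matrix (Fin n) (Fin m) ℝ |
      ∃ (c : Fin t → Fin n → ℝ) (r : Fin t → Fin m → ℝ),
        (∀ h i, c h i ∈ Set.Icc (0:ℝ) 1) ∧ (∀ h j, r h j ∈ Set.Icc (0:ℝ) B) ∧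
        N = ∑ h, Matrix.vecMulVec (c h) (r h)} = F '' K := by
    ext N
    constructor
    · rintro ⟨c, r, hc, hr, hNe⟩
      refine ⟨(c, r), ?_, hNe.symm⟩
      rw [hK]
      constructor
      · intro h _; intro i _; exact hc h i
      · intro h _; intro j _; exact hr h j
    · rintro ⟨⟨c, r⟩, hmem, hNe⟩
      rw [hK] at hmem
      obtain ⟨h1, h2⟩ := hmem
      exact ⟨c, r, fun h i => h1 h (Set.mem_univ h) i (Set.mem_univ i),
        fun h j => h2 h (Set.mem_univ h) j (Set.mem_univ j), hNe.symm⟩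
  rw [himg]
  exact hKc.image hFc

lemma frobDist_entry_le {n m : ℕ} (P N : Matrix (Fin n) (Fin m) ℝ) (i : Fin n) (j : Fin m) :
    |P i j - N i j| ≤ frobDist P N := by
  rw [frobDist, ← Real.sqrt_sq_eq_abs]
  apply Real.sqrt_le_sqrt
  calc (P i j - N i j) ^ 2 ≤ ∑ j', (P i j' - N i j') ^ 2 :=
        Finset.single_le_sum (f := fun j' => (P i j' - N i j') ^ 2)
          (fun j' _ => sq_nonneg _) (Finset.mem_univ j)
    _ ≤ ∑ i', ∑ j', (P i' j' - N i' j') ^ 2 :=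
        Finset.single_le_sum (f := fun i' => ∑ j', (P i' j' - N i' j') ^ 2)
          (fun i' _ => Finset.sum_nonneg fun j' _ => sq_nonneg _) (Finset.mem_univ i)

lemma continuous_frobDist {n m : ℕ} (P : Matrix (Fin n) (Fin m) ℝ) :
    Continuous (fun N : Matrix (Fin n) (Fin m) ℝ => frobDist N P) := by
  apply Real.continuous_sqrt.comp
  apply continuous_finset_sum
  intro i _
  apply continuous_finset_sum
  intro j _
  exact ((continuous_id.matrix_elem i j).sub continuous_const).pow 2

lemma frobDist_eq_zero {n m : ℕ} {P N : Matrix (Fin n) (Fin m) ℝ}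
    (h : frobDist P N = 0) : P = N := by
  rw [frobDist, Real.sqrt_eq_zero'] at h
  have h' : (∑ i, ∑ j, (P i j - N i j) ^ 2) = 0 :=
    le_antisymm h (Finset.sum_nonneg fun i _ => Finset.sum_nonneg fun j _ => sq_nonneg _)
  ext i j
  have hrow := (Finset.sum_eq_zero_iff_of_nonneg
    (fun i _ => Finset.sum_nonneg fun j _ => sq_nonneg ((P i j - N i j)))).mp h' i
    (Finset.mem_univ i)
  have hentry := (Finset.sum_eq_zero_iff_of_nonneg
    (fun j _ => sq_nonneg ((P i j - N i j)))).mp hrow j (Finset.mem_univ j)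
  have := pow_eq_zero_iff (n := 2) (by norm_num) |>.mp hentry
  linarith

theorem nnRank_lowerSemicontinuous {n m : ℕ} (P : Matrix (Fin n) (Fin m) ℝ)
    (hP : ∀ i j, 0 ≤ P i j) (hcol : ∀ j, ∃ i, P i j ≠ 0)
    (k : ℕ) (hk : nnRank P = k) :
    ∃ ε > (0 : ℝ), ∀ N : Matrix (Fin n) (Fin m) ℝ,
      (∀ i j, 0 ≤ N i j) → frobDist N P < ε → k ≤ nnRank N := by
  classical
  rcases Nat.eq_zero_or_pos k with hk0 | hkpos
  · exact ⟨1, one_pos, fun N _ _ => hk0 ▸ Nat.zero_le _⟩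
  -- k ≥ 1, so n ≥ 1
  have hn : n ≠ 0 := by
    intro hn0
    subst hn0
    have h0 : (0 : ℕ) ∈ {k : ℕ | ∃ (c : Fin k → Fin 0 → ℝ) (r : Fin k → Fin m → ℝ),
        (∀ h i, 0 ≤ c h i) ∧ (∀ h j, 0 ≤ r h j) ∧
        P = ∑ h, Matrix.vecMulVec (c h) (r h)} := by
      refine ⟨Fin.elim0, Fin.elim0, fun h => h.elim0, fun h => h.elim0, ?_⟩
      ext i j
      exact i.elim0
    have : nnRank P ≤ 0 := Nat.sInf_le h0
    omega
  haveI : Nonempty (Fin n) := ⟨⟨0, Nat.pos_of_ne_zero hn⟩⟩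
  -- the bound B
  set B : ℝ := (∑ i, ∑ j, P i j) + 1 with hB
  have hB0 : 0 ≤ B := by
    have : 0 ≤ ∑ i, ∑ j, P i j :=
      Finset.sum_nonneg fun i _ => Finset.sum_nonneg fun j _ => hP i j
    linarith
  have hPB : ∀ i j, P i j + 1 ≤ B := by
    intro i j
    have h1 : P i j ≤ ∑ j', P i j' :=
      Finset.single_le_sum (fun j' _ => hP i j') (Finset.mem_univ j)
    have h2 : (∑ j', P i j') ≤ ∑ i', ∑ j', P i' j' :=
      Finset.single_le_sum (f := fun i' => ∑ j', P i' j')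
        (fun i' _ => Finset.sum_nonneg fun j' _ => hP i' j') (Finset.mem_univ i)
    rw [hB]; linarith
  -- the compact "trap" set
  set T : Set (Matrix (Fin n) (Fin m) ℝ) :=
    ⋃ j ∈ Finset.range k, {N : Matrix (Fin n) (Fin m) ℝ |
      ∃ (c : Fin j → Fin n → ℝ) (r : Fin j → Fin m → ℝ),
        (∀ h i, c h i ∈ Set.Icc (0:ℝ) 1) ∧ (∀ h j', r h j' ∈ Set.Icc (0:ℝ) B) ∧
        N = ∑ h, Matrix.vecMulVec (c h) (r h)} with hT
  have hTc : IsCompact T := by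
    rw [hT]
    apply (Finset.range k).finite_toSet.isCompact_biUnion
    intro j _
    exact isCompact_factSet n m j B
  have hPT : P ∉ T := by
    rw [hT]
    simp only [Set.mem_iUnion, Finset.mem_range]
    rintro ⟨j, hj, c, r, hc, hr, hPe⟩
    have : nnRank P ≤ j := Nat.sInf_le ⟨c, r, fun h i => (hc h i).1, fun h j' => (hr h j').1, hPe⟩
    omega
  -- membership in T for nearby low-rank matrices
  have hmemT : ∀ N : Matrix (Fin n) (Fin m) ℝ, (∀ i j, 0 ≤ N i j) →
      (∀ i j, N i j ≤ B) → nnRank N < k → N ∈ T := by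
    intro N hN hNB hNr
    obtain ⟨c0, r0, hc0, hr0, hNe⟩ := exists_nn_factorization N hN
    have hnonempty : {t : ℕ | ∃ (c : Fin t → Fin n → ℝ) (r : Fin t → Fin m → ℝ),
        (∀ h i, 0 ≤ c h i) ∧ (∀ h j, 0 ≤ r h j) ∧
        N = ∑ h, Matrix.vecMulVec (c h) (r h)}.Nonempty := ⟨n * m, c0, r0, hc0, hr0, hNe⟩
    obtain ⟨c, r, hc, hr, hNe'⟩ := Nat.sInf_mem hnonempty
    obtain ⟨c', r', hc', hr', hNe''⟩ :=
      exists_normalized_factorization B hB0 N hNB c r hc hr hNe'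
    rw [hT]
    simp only [Set.mem_iUnion, Finset.mem_range]
    exact ⟨nnRank N, hNr, c', r', hc', hr', hNe''⟩
  -- choose ε
  rcases T.eq_empty_or_nonempty with hTe | hTne
  · refine ⟨1, one_pos, fun N hN hNd => ?_⟩
    by_contra hlt
    push_neg at hlt
    have hNB : ∀ i j, N i j ≤ B := by
      intro i j
      have h1 : |N i j - P i j| ≤ frobDist N P := frobDist_entry_le N P i j
      have := hPB i j
      have := abs_le.mp h1
      linarith [this.2]
    exact absurd (hmemT N hN hNB hlt) (hTe ▸ Set.notMem_empty N)
  · obtain ⟨x, hxT, hxmin⟩ := hTc.exists_isMinOn hTne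
      ((continuous_frobDist P).continuousOn)
    have hxpos : 0 < frobDist x P := by
      rcases lt_or_eq_of_le (Real.sqrt_nonneg _ : (0:ℝ) ≤ frobDist x P) with h | h
      · exact h
      · exfalso
        exact hPT ((frobDist_eq_zero h.symm) ▸ hxT)
    refine ⟨min (frobDist x P) 1, lt_min hxpos one_pos, fun N hN hNd => ?_⟩
    by_contra hlt
    push_neg at hlt
    have hNd1 : frobDist N P < 1 := hNd.trans_le (min_le_right _ _)
    have hNB : ∀ i j, N i j ≤ B := by
      intro i j
      have h1 : |N i j - P i j| ≤ frobDist N P := frobDist_entry_le N P i j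
      have h2 := hPB i j
      have h3 := abs_le.mp h1
      linarith [h3.2]
    have hNT : N ∈ T := hmemT N hN hNB hlt
    have : frobDist x P ≤ frobDist N P := hxmin hNT
    have : frobDist N P < frobDist x P := hNd.trans_le (min_le_left _ _)
    linarith
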